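/- arXiv:1208.6416 — 7 statements merged into one kernel-verified Lean document; each statement's English description precedes it below -/
import Mathlib

section
/- (Bell's theorem, for the specific Bell table.) Label the four measurements a = 0, a' = 1, b = 2, b' = 3, with outcomes in Bool (false = 0, true = 1). There is no function d : (Fin 4 → Bool) → ℝ with d s ≥ 0 for all s and ∑_s d s = 1 (sum over all 16 functions s : Fin 4 → Bool) whose marginals reproduce the Bell table, i.e. writing m(i,j)(x,y) := ∑_{s : s i = x ∧ s j = y} d s, such that: m(0,2) assigns 1/2 to (0,0) and (1,1) and 0 to (0,1) and (1,0); m(1,2) and m(0,3) each assign 3/8 to (0,0) and (1,1) and 1/8 to (0,1) and (1,0); and m(1,3) assigns 1/8 to (0,0) and (1,1) and 3/8 to (0,1) and (1,0). -/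
/-- The marginal of a distribution `d` on global assignments `s : Fin 4 → Bool`
onto the context consisting of measurements `i` and `j`, at joint outcome `(x, y)`. -/
def marg (d : (Fin 4 → Bool) → ℝ) (i j : Fin 4) (x y : Bool) : ℝ :=
  ∑ s ∈ Finset.univ.filter (fun s : Fin 4 → Bool => s i = x ∧ s j = y), d s


def e4 : (Bool × Bool × Bool × Bool) ≃ (Fin 4 → Bool) where
  toFun p := ![p.1, p.2.1, p.2.2.1, p.2.2.2]
  invFun s := (s 0, s 1, s 2, s 3)
  left_inv := by decide
  right_inv := by decide

lemma expand4 (f : (Fin 4 → Bool) → ℝ) :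
    ∑ s : Fin 4 → Bool, f s = ∑ p : Bool × Bool × Bool × Bool, f (e4 p) :=
  (Fintype.sum_equiv e4 _ _ fun _ => rfl).symm

/-- Bell's theorem for the Bell table: no probability distribution on global
assignments marginalizes to the empirical distributions of the Bell model.
Measurements: `a = 0`, `a' = 1`, `b = 2`, `b' = 3`; outcomes: `false = 0`, `true = 1`. -/
theorem bell_no_local_hidden_variable :
    ¬ ∃ d : (Fin 4 → Bool) → ℝ,
      (∀ s, 0 ≤ d s) ∧ (∑ s : Fin 4 → Bool, d s = 1) ∧
      -- context (a, b)
      marg d 0 2 false false = 1/2 ∧ marg d 0 2 true true = 1/2 ∧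
      marg d 0 2 false true = 0 ∧ marg d 0 2 true false = 0 ∧
      -- context (a', b)
      marg d 1 2 false false = 3/8 ∧ marg d 1 2 true true = 3/8 ∧
      marg d 1 2 false true = 1/8 ∧ marg d 1 2 true false = 1/8 ∧
      -- context (a, b')
      marg d 0 3 false false = 3/8 ∧ marg d 0 3 true true = 3/8 ∧
      marg d 0 3 false true = 1/8 ∧ marg d 0 3 true false = 1/8 ∧
      -- context (a', b')
      marg d 1 3 false false = 1/8 ∧ marg d 1 3 true true = 1/8 ∧
      marg d 1 3 false true = 3/8 ∧ marg d 1 3 true false = 3/8 := by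
  rintro ⟨d, hpos, hsum, h1, h2, h3, h4, h5, h6, h7, h8, h9, h10, h11, h12, h13, h14, h15, h16⟩
  simp only [marg, Finset.sum_filter, expand4, Fintype.sum_prod_type, Fintype.sum_bool, e4,
    Equiv.coe_fn_mk, Matrix.cons_val_zero, Matrix.cons_val_one, Matrix.head_cons,
    Matrix.cons_val_two, Matrix.tail_cons, Matrix.cons_val_three, Matrix.cons_val_fin_one,
    reduceCtorEq, and_true, true_and, and_false, false_and, if_true, if_false, add_zero,
    zero_add, if_neg, if_pos] at hsum h1 h2 h3 h4 h5 h6 h7 h8 h9 h10 h11 h12 h13 h14 h15 h16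
  linarith [hpos ![false,false,false,false], hpos ![false,false,false,true],
    hpos ![false,false,true,false], hpos ![false,false,true,true],
    hpos ![false,true,false,false], hpos ![false,true,false,true],
    hpos ![false,true,true,false], hpos ![false,true,true,true],
    hpos ![true,false,false,false], hpos ![true,false,false,true],
    hpos ![true,false,true,false], hpos ![true,false,true,true],
    hpos ![true,true,false,false], hpos ![true,true,false,true],
    hpos ![true,true,true,false], hpos ![true,true,true,true]]
end

section
/- (Hardy's non-locality, relational form.) Label the four measurements a = 0, a' = 1, b = 2, b' = 3, with outcomes in Bool. There is no set R of functions s : Fin 4 → Bool such that: {(s 0, s 2) : s ∈ R} is the set of all four pairs in Bool × Bool; {(s 1, s 2) : s ∈ R} is the set of all pairs except (false, false); {(s 0, s 3) : s ∈ R} is the set of all pairs except (false, false); and {(s 1, s 3) : s ∈ R} is the set of all pairs except (true, true). Equivalently, the Hardy support table has no universal relation. -/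
/-- Hardy's non-locality argument, relational form: the Hardy support table has no
universal relation. Measurements: `a = 0`, `a' = 1`, `b = 2`, `b' = 3`. -/
theorem hardy_no_universal_relation :
    ¬ ∃ R : Set (Fin 4 → Bool),
      ((fun s : Fin 4 → Bool => (s 0, s 2)) '' R = Set.univ) ∧
      ((fun s : Fin 4 → Bool => (s 1, s 2)) '' R = {p | p ≠ (false, false)}) ∧
      ((fun s : Fin 4 → Bool => (s 0, s 3)) '' R = {p | p ≠ (false, false)}) ∧
      ((fun s : Fin 4 → Bool => (s 1, s 3)) '' R = {p | p ≠ (true, true)}) := by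
  rintro ⟨R, h1, h2, h3, h4⟩
  have hmem : ((false, false) : Bool × Bool) ∈
      (fun s : Fin 4 → Bool => (s 0, s 2)) '' R := by
    rw [h1]; trivial
  obtain ⟨s, hsR, hs⟩ := hmem
  have h02 : s 0 = false ∧ s 2 = false := by
    have := hs; simp only [Prod.mk.injEq] at this; exact this
  have hs1 : s 1 = true := by
    have : (s 1, s 2) ∈ {p : Bool × Bool | p ≠ (false, false)} := by
      rw [← h2]; exact ⟨s, hsR, rfl⟩
    simp [h02.2] at this; exact this
  have hs3 : s 3 = true := by
    have : (s 0, s 3) ∈ {p : Bool × Bool | p ≠ (false, false)} := by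
      rw [← h3]; exact ⟨s, hsR, rfl⟩
    simp [h02.1] at this; exact this
  have : (s 1, s 3) ∈ {p : Bool × Bool | p ≠ (true, true)} := by
    rw [← h4]; exact ⟨s, hsR, rfl⟩
  simp [hs1, hs3] at this
end

section
/- If an empirical model has a local hidden-variable model in the probabilistic sense, then its support table has a universal relation. Precisely: let Σ = {A₁, …, A_k} be a finite family of finite attribute sets with union A, let dᵢ be a finitely-supported function from Aᵢ-tuples to the nonnegative reals for each i, and suppose there is a finitely-supported function d from A-tuples to the nonnegative reals such that for every i and every Aᵢ-tuple u, dᵢ(u) = ∑_{t an A-tuple with t|_{Aᵢ} = u} d(t). Then the set R := supp(d) of A-tuples satisfies R|_{Aᵢ} = supp(dᵢ) for every i; in particular supp(d) is a universal relation for the instance (supp(d₁), …, supp(d_k)). Consequently, if the instance of supports has no universal relation, then no such d exists. -/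
/-- An `A`-tuple: a function assigning to each attribute `a ∈ A` a data value in `D a`. -/
def Tup {α : Type*} (D : α → Type*) (A : Finset α) : Type _ :=
  ∀ a : A, D a

/-- Restriction of an `A`-tuple to a subset `B ⊆ A`. -/
def Tup.restrict {α : Type*} {D : α → Type*} {A B : Finset α} (h : B ⊆ A)
    (t : Tup D A) : Tup D B :=
  fun b => t ⟨b.1, h b.2⟩

/-- If a probabilistic instance `(d₁, …, d_k)` has a "local hidden-variable" model,
i.e. a finitely-supported global distribution `d` over tuples on the union of the
attribute sets whose marginal on each `A i` is `d i`, then the support of `d` is a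
universal relation for the instance of supports: its projection to each `A i` equals
the support of `dI i`. -/
theorem support_of_global_distribution_is_universal_relation
    {α : Type*} [DecidableEq α] {D : α → Type*} {k : ℕ}
    (A : Fin k → Finset α)
    (dI : ∀ i, Tup D (A i) → NNReal)
    (hIfin : ∀ i, (Function.support (dI i)).Finite)
    (d : Tup D (Finset.univ.biUnion A) → NNReal)
    (hfin : (Function.support d).Finite)
    (hmarg : ∀ i (u : Tup D (A i)),
      dI i u = ∑ᶠ (t : Tup D (Finset.univ.biUnion A))
        (_ : Tup.restrict (Finset.subset_biUnion_of_mem A (Finset.mem_univ i)) t = u),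
        d t) :
    ∀ i, Tup.restrict (Finset.subset_biUnion_of_mem A (Finset.mem_univ i)) ''
          Function.support d = Function.support (dI i) := by
  intro i
  set π := Tup.restrict (Finset.subset_biUnion_of_mem A (Finset.mem_univ i)) with hπ
  ext u
  constructor
  · rintro ⟨t, ht, rfl⟩
    simp only [Function.mem_support] at ht ⊢
    rw [hmarg i (π t)]
    have hs : ∑ᶠ (t' : Tup D (Finset.univ.biUnion A)) (_ : π t' = π t), d t'
        = ∑ᶠ t' ∈ {t' | π t' = π t}, d t' := rfl
    rw [hs, finsum_mem_def]
    have hfin' : (Function.support (Set.indicator {t' | π t' = π t} d)).Finite :=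
      hfin.subset (by rw [Set.support_indicator]; exact Set.inter_subset_right)
    have hle : Set.indicator {t' | π t' = π t} d t ≤
        ∑ᶠ t', Set.indicator {t' | π t' = π t} d t' :=
      single_le_finsum t hfin' (fun j => zero_le)
    rw [Set.indicator_of_mem (by exact rfl)] at hle
    intro h0
    rw [h0] at hle
    exact ht (le_antisymm hle zero_le)
  · intro hu
    simp only [Function.mem_support] at hu
    rw [hmarg i u] at hu
    obtain ⟨t, ht, hdt⟩ := exists_ne_zero_of_finsum_mem_ne_zero (s := {t | π t = u}) hu
    exact ⟨t, hdt, ht⟩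
end

section
/- (Strong contextuality of the GHZ models.) Let n ≥ 3. There is no function s : Fin n → Bool → ZMod 2 (assigning an outcome s i m to measurement m ∈ {X, Y} at part i, where false codes X and true codes Y) such that for every context c : Fin n → Bool, writing k for the number of indices i with c i = true (the number of Y measurements in the context): if k ≡ 0 (mod 4) then ∑_{i} s i (c i) = 0 in ZMod 2, and if k ≡ 2 (mod 4) then ∑_{i} s i (c i) = 1 in ZMod 2. -/
/-- Strong contextuality of the GHZ models of type `(n, 2, 2)` for all `n ≥ 3`.
A global assignment is `s : Fin n → Bool → ZMod 2`, where `s i false` is the outcome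
for measurement `X` at part `i` and `s i true` the outcome for `Y` at part `i`.
A context `c : Fin n → Bool` selects `Y` at part `i` iff `c i = true`. No global
assignment lies in the GHZ support for every context: if the number of `Y`'s in the
context is `≡ 0 (mod 4)` the sum (mod 2) of outcomes must be `0`, and if it is
`≡ 2 (mod 4)` the sum must be `1`. -/
theorem ghz_strongly_contextual (n : ℕ) (hn : 3 ≤ n) :
    ¬ ∃ s : Fin n → Bool → ZMod 2,
      ∀ c : Fin n → Bool,
        ((Finset.univ.filter (fun i => c i = true)).card % 4 = 0 →
          ∑ i, s i (c i) = 0) ∧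
        ((Finset.univ.filter (fun i => c i = true)).card % 4 = 2 →
          ∑ i, s i (c i) = 1) := by
  rintro ⟨s, hs⟩
  have ha : (0 : ℕ) < n := by omega
  have hb : (1 : ℕ) < n := by omega
  have hc : (2 : ℕ) < n := by omega
  set a : Fin n := ⟨0, ha⟩ with hadef
  set b : Fin n := ⟨1, hb⟩ with hbdef
  set c : Fin n := ⟨2, hc⟩ with hcdef
  have hab : a ≠ b := by simp [hadef, hbdef, Fin.ext_iff]
  have hac : a ≠ c := by simp [hadef, hcdef, Fin.ext_iff]
  have hbc : b ≠ c := by simp [hbdef, hcdef, Fin.ext_iff]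
  have key : ∀ u v : Fin n, u ≠ v →
      ∑ i, s i (decide (i = u) || decide (i = v)) = 1 := by
    intro u v huv
    refine (hs (fun i => decide (i = u) || decide (i = v))).2 ?_
    have hfil : Finset.univ.filter
        (fun i => (decide (i = u) || decide (i = v)) = true) = {u, v} := by
      ext i
      simp
    rw [hfil, Finset.card_pair huv]
  have h0 : ∑ i, s i false = 0 := by
    refine (hs (fun _ => false)).1 ?_
    simp
  have h1 := key a b hab
  have h2 := key a c hac
  have h3 := key b c hbc
  have hsum : ∑ i, (s i false + s i (decide (i = a) || decide (i = b))
      + s i (decide (i = a) || decide (i = c))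
      + s i (decide (i = b) || decide (i = c))) = 0 := by
    apply Finset.sum_eq_zero
    intro i _
    have e1 : ∀ x y : ZMod 2, x + y + y + x = 0 := by decide
    have e2 : ∀ x y : ZMod 2, x + y + x + y = 0 := by decide
    have e3 : ∀ x y : ZMod 2, x + x + y + y = 0 := by decide
    have e4 : ∀ x : ZMod 2, x + x + x + x = 0 := by decide
    by_cases hia : i = a
    · subst hia
      simp [hab, hac, Ne.symm hab, Ne.symm hac, e1]
    · by_cases hib : i = b
      · subst hib
        simp [hab, hbc, Ne.symm hab, Ne.symm hbc, e2]
      · by_cases hic : i = c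
        · subst hic
          simp [hac, hbc, Ne.symm hac, Ne.symm hbc, e3]
        · simp [hia, hib, hic, e4]
  rw [Finset.sum_add_distrib, Finset.sum_add_distrib, Finset.sum_add_distrib,
    h0, h1, h2, h3] at hsum
  norm_num at hsum
  exact absurd hsum (by decide)
end

section
/- (Combinatorial Kochen–Specker condition.) Let α be a finite type of attributes and Σ a finite family of finite subsets of α. Suppose there exists a global section s : α → Bool satisfying the one-in-each condition: for every A ∈ Σ, exactly one element a ∈ A has s a = true. Then every natural number that divides |Σ(a)| for every a ∈ α, where Σ(a) := {A ∈ Σ | a ∈ A}, also divides |Σ|. -/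
/-- Combinatorial Kochen–Specker condition: if a schema `Sch` admits a global section
`s` with exactly one `true`-valued attribute in each member of `Sch`, then every
common divisor of the numbers `|Sch(a)| = |{A ∈ Sch | a ∈ A}|` divides `|Sch|`. -/
theorem kochen_specker_divisibility
    {α : Type*} [Fintype α] [DecidableEq α] (Sch : Finset (Finset α))
    (s : α → Bool)
    (hone : ∀ A ∈ Sch, (A.filter (fun a => s a = true)).card = 1) :
    ∀ m : ℕ, (∀ a : α, m ∣ (Sch.filter (fun A => a ∈ A)).card) → m ∣ Sch.card := by
  intro m hm
  have key : Sch.card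
      = ∑ a ∈ Finset.univ.filter (fun a => s a = true),
          (Sch.filter (fun A => a ∈ A)).card := by
    calc Sch.card = ∑ A ∈ Sch, 1 := by simp
      _ = ∑ A ∈ Sch, (A.filter (fun a => s a = true)).card :=
          Finset.sum_congr rfl (fun A hA => (hone A hA).symm)
      _ = ∑ A ∈ Sch, ∑ a ∈ Finset.univ.filter (fun a => s a = true),
            (if a ∈ A then 1 else 0) := by
          refine Finset.sum_congr rfl (fun A _ => ?_)
          rw [← Finset.sum_filter, Finset.filter_filter]
          simp only [Finset.sum_const, smul_eq_mul, mul_one]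
          congr 1
          ext a
          simp [and_comm]
      _ = ∑ a ∈ Finset.univ.filter (fun a => s a = true), ∑ A ∈ Sch,
            (if a ∈ A then 1 else 0) := Finset.sum_comm
      _ = ∑ a ∈ Finset.univ.filter (fun a => s a = true),
            (Sch.filter (fun A => a ∈ A)).card := by
          refine Finset.sum_congr rfl (fun a _ => ?_)
          rw [← Finset.sum_filter]
          simp
  rw [key]
  exact Finset.dvd_sum (fun a _ => hm a)
end

section
/- (Parity proof of Kochen–Specker-type results.) Let α be a finite type of attributes and Σ a finite family of finite subsets of α. If every a ∈ α belongs to an even number of members of Σ (i.e. |Σ(a)| is even for every a, where Σ(a) := {A ∈ Σ | a ∈ A}), while |Σ| is odd, then there is no global section s : α → Bool such that every A ∈ Σ contains exactly one a with s a = true. -/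
/-- Parity proof of Kochen–Specker-type results: if every attribute belongs to an even
number of members of the schema `Sch`, while `Sch` has an odd number of members, then
there is no global section with exactly one `true`-valued attribute in each member. -/
theorem kochen_specker_parity
    {α : Type*} [Fintype α] [DecidableEq α] (Sch : Finset (Finset α))
    (heven : ∀ a : α, Even (Sch.filter (fun A => a ∈ A)).card)
    (hodd : Odd Sch.card) :
    ¬ ∃ s : α → Bool, ∀ A ∈ Sch, (A.filter (fun a => s a = true)).card = 1 := by
  rintro ⟨s, hs⟩
  have key : ∑ A ∈ Sch, (A.filter (fun a => s a = true)).card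
      = ∑ a : α, if s a = true then (Sch.filter (fun A => a ∈ A)).card else 0 := by
    have step1 : ∀ A ∈ Sch, (A.filter (fun a => s a = true)).card
        = ∑ a : α, if a ∈ A ∧ s a = true then 1 else 0 := by
      intro A _
      rw [Finset.card_filter, ← Finset.sum_filter]
      rw [show Finset.filter (fun a => s a = true) A
        = Finset.filter (fun a => a ∈ A ∧ s a = true) Finset.univ by
          ext x; simp [and_comm]]
      rw [Finset.sum_filter]
    rw [Finset.sum_congr rfl step1, Finset.sum_comm]
    refine Finset.sum_congr rfl fun a _ => ?_
    by_cases h : s a = true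
    · rw [if_pos h, Finset.card_filter]
      exact Finset.sum_congr rfl fun A _ => by simp [h]
    · simp [h]
  have h1 : ∑ A ∈ Sch, (A.filter (fun a => s a = true)).card = Sch.card := by
    rw [Finset.sum_congr rfl hs]; simp
  have heven' : Even (∑ a : α, if s a = true then (Sch.filter (fun A => a ∈ A)).card else 0) := by
    apply Finset.even_sum
    intro a _
    by_cases h : s a = true
    · simpa [h] using heven a
    · simp [h]
  rw [h1] at key
  rw [key] at hodd
  exact (Nat.not_even_iff_odd.mpr hodd) heven'
end

section
/- (Special case of GHZ strong contextuality used in the paper's main argument, n divisible by 4.) Let n = 4k with k ≥ 1. There is no function s : Fin n → Bool → ZMod 2 such that: (1) ∑_i s i true = 0 in ZMod 2 (the all-Y context, with n ≡ 0 mod 4 Y's, has an even number of 1 outcomes), and (2) for every pair of distinct indices i ≠ j, the context obtained from all-Y by replacing positions i and j with X satisfies ∑_{l ≠ i, j} s l true + s i false + s j false = 1 in ZMod 2 (an odd number of 1 outcomes, since the number of Y's is then ≡ 2 mod 4). -/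
/-- Strong contextuality of the GHZ model for `n = 4k`, `k ≥ 1`: no global assignment
`s : Fin n → Bool → ZMod 2` (with `s i false` the outcome for `X` at part `i` and
`s i true` the outcome for `Y` at part `i`) satisfies the parity conditions of the
all-`Y` context (an even number of `1` outcomes) together with those of every context
obtained from it by replacing two `Y`'s by `X`'s (an odd number of `1` outcomes). -/
theorem ghz_strongly_contextual_four_k (k : ℕ) (hk : 1 ≤ k) (n : ℕ) (hn : n = 4 * k) :
    ¬ ∃ s : Fin n → Bool → ZMod 2,
      (∑ i, s i true = 0) ∧
      (∀ i j : Fin n, i ≠ j →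
        (∑ l ∈ Finset.univ \ {i, j}, s l true) + s i false + s j false = 1) := by
  rintro ⟨s, hT, hp⟩
  subst hn
  have h2 : (2 : ZMod 2) = 0 := rfl
  have key : ∀ i j : Fin (4 * k), i ≠ j →
      (s i false + s i true) + (s j false + s j true) = 1 := by
    intro i j hij
    have h := hp i j hij
    rw [Finset.sum_sdiff_eq_sub (Finset.subset_univ _), Finset.sum_pair hij, hT] at h
    linear_combination h + (s i true + s j true) * h2
  have h0 : (0 : ℕ) < 4 * k := by omega
  have h1 : (1 : ℕ) < 4 * k := by omega
  have h2' : (2 : ℕ) < 4 * k := by omega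
  have a := key ⟨0, h0⟩ ⟨1, h1⟩ (by simp [Fin.ext_iff])
  have b := key ⟨0, h0⟩ ⟨2, h2'⟩ (by simp [Fin.ext_iff])
  have c := key ⟨1, h1⟩ ⟨2, h2'⟩ (by simp [Fin.ext_iff])
  have : (0 : ZMod 2) = 1 := by
    linear_combination a + b + c +
      (1 - s ⟨0, h0⟩ false - s ⟨0, h0⟩ true - s ⟨1, h1⟩ false - s ⟨1, h1⟩ true
        - s ⟨2, h2'⟩ false - s ⟨2, h2'⟩ true) * h2
  exact absurd this (by decide)
end
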